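/- arXiv:1506.03369 — 3 statements merged into one kernel-verified Lean document; each statement's English description precedes it below -/
import Mathlib

section
/- Pointwise characterization of the projection formula: for reals 0 < m < M and s ∈ ℝ, the number t ∈ [M^{-3}, m^{-3}] satisfies (s - (1/3) t^{-4/3})(k - t) ≥ 0 for all k ∈ [M^{-3}, m^{-3}] if and only if t = (P_{[m^4, M^4]}(3s))^{-3/4}, where P_{[a,b]}(r) = max(a, min(b, r)). -/
/-- The orthogonal projection (clamp) of `ℝ` onto the interval `[a, b]`. -/
def proj (a b t : ℝ) : ℝ := max a (min b t)

theorem stmt2 (m M s t : ℝ) (hm : 0 < m) (hmM : m < M)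
    (ht : t ∈ Set.Icc (M ^ (-3 : ℝ)) (m ^ (-3 : ℝ))) :
    (∀ k ∈ Set.Icc (M ^ (-3 : ℝ)) (m ^ (-3 : ℝ)),
        0 ≤ (s - (1/3) * t ^ (-(4/3) : ℝ)) * (k - t)) ↔
      t = proj (m ^ (4 : ℝ)) (M ^ (4 : ℝ)) (3 * s) ^ (-(3/4) : ℝ) := by
  have hM : (0:ℝ) < M := hm.trans hmM
  have ha : 0 < M ^ (-3 : ℝ) := Real.rpow_pos_of_pos hM _
  have hb : 0 < m ^ (-3 : ℝ) := Real.rpow_pos_of_pos hm _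
  have hab : M ^ (-3 : ℝ) < m ^ (-3 : ℝ) :=
    Real.rpow_lt_rpow_of_neg hm hmM (by norm_num)
  obtain ⟨hta, htb⟩ := ht
  have htpos : 0 < t := ha.trans_le hta
  have hfa : (M ^ (-3 : ℝ)) ^ (-(4/3) : ℝ) = M ^ (4:ℝ) := by
    rw [← Real.rpow_mul hM.le]; norm_num
  have hfb : (m ^ (-3 : ℝ)) ^ (-(4/3) : ℝ) = m ^ (4:ℝ) := by
    rw [← Real.rpow_mul hm.le]; norm_num
  have hm4M4 : m ^ (4:ℝ) ≤ M ^ (4:ℝ) :=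
    Real.rpow_le_rpow hm.le hmM.le (by norm_num)
  have hinv : ∀ c : ℝ, t ^ (-(4/3) : ℝ) = c → t = c ^ (-(3/4) : ℝ) := by
    intro c hc
    have h2 : (t ^ (-(4/3) : ℝ)) ^ (-(3/4) : ℝ) = t := by
      rw [← Real.rpow_mul htpos.le]; norm_num
    rw [← h2, hc]
  have haM : (M ^ (4:ℝ)) ^ (-(3/4) : ℝ) = M ^ (-3:ℝ) := by
    rw [← Real.rpow_mul hM.le]; norm_num
  have hbm : (m ^ (4:ℝ)) ^ (-(3/4) : ℝ) = m ^ (-3:ℝ) := by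
    rw [← Real.rpow_mul hm.le]; norm_num
  have hlt_a : M ^ (-3:ℝ) < t → t ^ (-(4/3) : ℝ) < M ^ (4:ℝ) := fun h => by
    rw [← hfa]; exact Real.rpow_lt_rpow_of_neg ha h (by norm_num)
  have hlt_b : t < m ^ (-3:ℝ) → m ^ (4:ℝ) < t ^ (-(4/3) : ℝ) := fun h => by
    rw [← hfb]; exact Real.rpow_lt_rpow_of_neg htpos h (by norm_num)
  constructor
  · intro h
    have h1 := h _ ⟨le_refl _, hab.le⟩
    have h2 := h _ ⟨hab.le, le_refl _⟩
    rcases le_or_gt (M ^ (4:ℝ)) (3 * s) with hsM | hsM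
    · -- proj = M^4, target t = M^{-3}
      have hproj : proj (m ^ (4:ℝ)) (M ^ (4:ℝ)) (3*s) = M ^ (4:ℝ) := by
        simp only [proj, min_eq_left hsM, max_eq_right hm4M4]
      rw [hproj, haM]
      rcases eq_or_lt_of_le hta with heq | hlt
      · exact heq.symm
      · exfalso
        have hat : M ^ (-3:ℝ) - t < 0 := by linarith
        have hgle : s - (1/3) * t ^ (-(4/3) : ℝ) ≤ 0 := by
          by_contra hc; push_neg at hc
          exact absurd h1 (not_le.mpr (mul_neg_of_pos_of_neg hc hat))
        have := hlt_a hlt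
        linarith
    rcases le_or_gt (3 * s) (m ^ (4:ℝ)) with hsm | hsm
    · have hproj : proj (m ^ (4:ℝ)) (M ^ (4:ℝ)) (3*s) = m ^ (4:ℝ) := by
        simp only [proj, min_eq_right (hsm.trans hm4M4), max_eq_left hsm]
      rw [hproj, hbm]
      rcases eq_or_lt_of_le htb with heq | hlt
      · exact heq
      · exfalso
        have hbt : 0 < m ^ (-3:ℝ) - t := by linarith
        have hgge : 0 ≤ s - (1/3) * t ^ (-(4/3) : ℝ) := by
          by_contra hc; push_neg at hc
          exact absurd h2 (not_le.mpr (mul_neg_of_neg_of_pos hc hbt))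
        have := hlt_b hlt
        linarith
    · have hproj : proj (m ^ (4:ℝ)) (M ^ (4:ℝ)) (3*s) = 3*s := by
        simp only [proj, min_eq_right hsM.le, max_eq_right hsm.le]
      rw [hproj]
      have hta' : M ^ (-3:ℝ) < t := by
        rcases eq_or_lt_of_le hta with heq | hlt
        · exfalso
          have hbt : 0 < m ^ (-3:ℝ) - t := by rw [← heq]; linarith
          have hgge : 0 ≤ s - (1/3) * t ^ (-(4/3) : ℝ) := by
            by_contra hc; push_neg at hc
            exact absurd h2 (not_le.mpr (mul_neg_of_neg_of_pos hc hbt))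
          have hfeq : t ^ (-(4/3) : ℝ) = M ^ (4:ℝ) := by rw [← heq, hfa]
          linarith
        · exact hlt
      have htb' : t < m ^ (-3:ℝ) := by
        rcases eq_or_lt_of_le htb with heq | hlt
        · exfalso
          have hat : M ^ (-3:ℝ) - t < 0 := by rw [heq]; linarith
          have hgle : s - (1/3) * t ^ (-(4/3) : ℝ) ≤ 0 := by
            by_contra hc; push_neg at hc
            exact absurd h1 (not_le.mpr (mul_neg_of_pos_of_neg hc hat))
          have hfeq : t ^ (-(4/3) : ℝ) = m ^ (4:ℝ) := by rw [heq, hfb]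
          linarith
        · exact hlt
      have hgle : s - (1/3) * t ^ (-(4/3) : ℝ) ≤ 0 := by
        by_contra hc; push_neg at hc
        exact absurd h1 (not_le.mpr (mul_neg_of_pos_of_neg hc (by linarith)))
      have hgge : 0 ≤ s - (1/3) * t ^ (-(4/3) : ℝ) := by
        by_contra hc; push_neg at hc
        exact absurd h2 (not_le.mpr (mul_neg_of_neg_of_pos hc (by linarith)))
      exact hinv _ (by linarith)
  · intro h k hk
    rcases le_or_gt (M ^ (4:ℝ)) (3 * s) with hsM | hsM
    · have hproj : proj (m ^ (4:ℝ)) (M ^ (4:ℝ)) (3*s) = M ^ (4:ℝ) := by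
        simp only [proj, min_eq_left hsM, max_eq_right hm4M4]
      rw [hproj, haM] at h
      have hfeq : t ^ (-(4/3) : ℝ) = M ^ (4:ℝ) := by rw [h, hfa]
      have hkt : 0 ≤ k - t := by rw [h]; linarith [hk.1]
      have hgge : 0 ≤ s - (1/3) * t ^ (-(4/3) : ℝ) := by rw [hfeq]; linarith
      exact mul_nonneg hgge hkt
    rcases le_or_gt (3 * s) (m ^ (4:ℝ)) with hsm | hsm
    · have hproj : proj (m ^ (4:ℝ)) (M ^ (4:ℝ)) (3*s) = m ^ (4:ℝ) := by
        simp only [proj, min_eq_right (hsm.trans hm4M4), max_eq_left hsm]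
      rw [hproj, hbm] at h
      have hfeq : t ^ (-(4/3) : ℝ) = m ^ (4:ℝ) := by rw [h, hfb]
      have hkt : k - t ≤ 0 := by rw [h]; linarith [hk.2]
      have hgle : s - (1/3) * t ^ (-(4/3) : ℝ) ≤ 0 := by rw [hfeq]; linarith
      have := mul_nonneg (neg_nonneg.2 hgle) (neg_nonneg.2 hkt)
      rw [neg_mul_neg] at this
      exact this
    · have hproj : proj (m ^ (4:ℝ)) (M ^ (4:ℝ)) (3*s) = 3*s := by
        simp only [proj, min_eq_right hsM.le, max_eq_right hsm.le]
      rw [hproj] at h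
      have hs0 : 0 < 3 * s := lt_trans (Real.rpow_pos_of_pos hm _) hsm
      have hfeq : t ^ (-(4/3) : ℝ) = 3 * s := by
        rw [h, ← Real.rpow_mul hs0.le]; norm_num
      have : s - (1/3) * t ^ (-(4/3) : ℝ) = 0 := by rw [hfeq]; ring
      rw [this, zero_mul]
end

section
/- Slater-type L^1 bound on the regularized multiplier: let γ > 0, τ > 0, ε_s > 0, and y^γ, y_s ∈ L^2(Ω) with y_s ≥ -τ + ε_s a.e. Set ν^γ := γ min(y^γ + τ, 0). If ⟨ν^γ, y^γ - y_s⟩_{L^2} ≤ C for some constant C, then ε_s ‖ν^γ‖_{L^1(Ω)} ≤ C. -/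
open MeasureTheory

theorem stmt6 {α : Type*} [MeasurableSpace α] (μ : Measure α) [IsFiniteMeasure μ]
    (γ τ εs C : ℝ) (hγ : 0 < γ) (hτ : 0 < τ) (hεs : 0 < εs)
    (yγ ys : α → ℝ) (hyγ : MemLp yγ 2 μ) (hys : MemLp ys 2 μ)
    (hslater : ∀ᵐ x ∂μ, -τ + εs ≤ ys x)
    (hC : ∫ x, (γ * min (yγ x + τ) 0) * (yγ x - ys x) ∂μ ≤ C) :
    εs * ∫ x, |γ * min (yγ x + τ) 0| ∂μ ≤ C := by
  set ν : α → ℝ := fun x => γ * min (yγ x + τ) 0 with hν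
  have hyγτ : MemLp (fun x => yγ x + τ) 2 μ := hyγ.add (memLp_const τ)
  have hνmem : MemLp ν 2 μ := by
    have h0 : MemLp (fun x => min (yγ x + τ) 0) 2 μ :=
      hyγτ.inf (memLp_const 0)
    simpa [hν] using h0.const_mul γ
  have hdiff : MemLp (fun x => yγ x - ys x) 2 μ := hyγ.sub hys
  have hint1 : Integrable (fun x => ν x * (yγ x - ys x)) μ := by
    have h := hdiff.smul (φ := ν) (r := 1) hνmem
      (hpqr := ⟨by rw [ENNReal.inv_two_add_inv_two, inv_one]⟩)
    rw [memLp_one_iff_integrable] at h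
    exact h
  have hint2 : Integrable (fun x => |ν x|) μ :=
    (hνmem.integrable (by norm_num)).abs
  have hpt : ∀ᵐ x ∂μ, εs * |ν x| ≤ ν x * (yγ x - ys x) := by
    filter_upwards [hslater] with x hx
    rcases le_or_gt 0 (yγ x + τ) with h | h
    · simp [hν, min_eq_right h]
    · have hm : min (yγ x + τ) 0 = yγ x + τ := min_eq_left h.le
      rw [hν]
      simp only [hm]
      rw [abs_of_nonpos (by nlinarith)]
      have hpos : (0:ℝ) ≤ -(γ * (yγ x + τ)) := by nlinarith
      have h1 : εs * -(γ * (yγ x + τ)) ≤ (ys x + τ) * -(γ * (yγ x + τ)) :=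
        mul_le_mul_of_nonneg_right (by linarith) hpos
      nlinarith [mul_nonneg hγ.le (mul_self_nonneg (yγ x + τ))]
  have h1 : ∫ x, εs * |ν x| ∂μ ≤ ∫ x, ν x * (yγ x - ys x) ∂μ :=
    integral_mono_ae (hint2.const_mul εs) hint1 hpt
  rw [integral_const_mul] at h1
  exact h1.trans hC
end

section
/- Regularization error bound from constraint violation: let l, l^γ ∈ L_ad with states y = T(z l), y^γ = T(z l^γ) for a bounded linear operator T : L^2(Ω) → H²(Ω) ∩ H¹₀(Ω), and suppose the optimality conditions hold with multiplier ν ∈ M(\bar{Ω}) and regularized multiplier ν^γ = γ(y^γ+τ)^-. If the variational inequalities give c‖l - l^γ‖²_{L²} ≤ ⟨y - y^γ, ν^γ⟩ - ⟨y - y^γ, ν⟩, y ≥ -τ, ν ≤ 0, ⟨y+τ, ν⟩ = 0, then c‖l - l^γ‖²_{L²} ≤ ‖(y^γ + τ)^-‖_{L^∞(Ω)} ‖ν‖_{M(\bar{Ω})}. -/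
open MeasureTheory

/-- Integral of a function against a finite signed measure, via Jordan decomposition. -/
noncomputable def jint {X : Type*} [MeasurableSpace X] (ν : SignedMeasure X) (f : X → ℝ) : ℝ :=
  ∫ x, f x ∂ν.toJordanDecomposition.posPart - ∫ x, f x ∂ν.toJordanDecomposition.negPart

lemma posPart_eq_zero_of_nonpos {X : Type*} [MeasurableSpace X] (ν : SignedMeasure X)
    (hν : ν ≤ 0) : ν.toJordanDecomposition.posPart = 0 := by
  obtain ⟨i, hi₁, hi₂, hi₃, hpos, hneg⟩ := ν.toJordanDecomposition_spec
  rw [hpos]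
  ext j hj
  rw [SignedMeasure.toMeasureOfZeroLE_apply _ hi₂ hi₁ hj]
  have h1 : ν (i ∩ j) ≤ 0 := by
    have := (VectorMeasure.le_iff.mp hν) (i ∩ j) (hi₁.inter hj)
    simpa using this
  have h2 : 0 ≤ ν (i ∩ j) :=
    VectorMeasure.nonneg_of_zero_le_restrict ν
      (VectorMeasure.zero_le_restrict_subset ν hi₁ Set.inter_subset_left hi₂)
  simp [le_antisymm h1 h2]

theorem stmt13 {X : Type*} [MetricSpace X] [CompactSpace X] [MeasurableSpace X] [BorelSpace X]
    (μ : Measure X) [IsFiniteMeasure μ]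
    (τ γ c : ℝ) (hτ : 0 < τ) (hγ : 0 < γ) (hc : 0 < c)
    (l lγ : X → ℝ) (y yγ : C(X, ℝ)) (hy : ∀ x, -τ ≤ y x)
    (ν : SignedMeasure X) (hν : ν ≤ 0)
    (hcompl : jint ν (fun x => y x + τ) = 0)
    (hvi : c * ∫ x, (l x - lγ x) ^ 2 ∂μ ≤
      (∫ x, (y x - yγ x) * (γ * min (yγ x + τ) 0) ∂μ) -
        jint ν (fun x => y x - yγ x)) :
    c * ∫ x, (l x - lγ x) ^ 2 ∂μ ≤
      (⨆ x, |min (yγ x + τ) 0|) * (ν.totalVariation Set.univ).toReal := by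
  rcases isEmpty_or_nonempty X with hX | hX
  · have h1 : (∫ x, (l x - lγ x) ^ 2 ∂μ) = 0 := by
      simp [integral_of_isEmpty]
    rw [h1, mul_zero]
    have h2 : (⨆ x : X, |min (yγ x + τ) 0|) = 0 := by
      exact Real.iSup_of_isEmpty _
    rw [h2, zero_mul]
  · set N := ν.toJordanDecomposition.negPart with hN
    have hP : ν.toJordanDecomposition.posPart = 0 := posPart_eq_zero_of_nonpos ν hν
    -- first term is nonpositive
    have hA : (∫ x, (y x - yγ x) * (γ * min (yγ x + τ) 0) ∂μ) ≤ 0 := by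
      apply integral_nonpos
      intro x
      show (y x - yγ x) * (γ * min (yγ x + τ) 0) ≤ 0
      rcases le_total (yγ x + τ) 0 with h | h
      · rw [min_eq_left h]
        nlinarith [hy x, hγ.le, mul_nonneg (by linarith [hy x] : (0:ℝ) ≤ y x + τ) (by linarith : (0:ℝ) ≤ -(yγ x + τ)), sq_nonneg (yγ x + τ), mul_nonneg hγ.le (mul_nonneg (by linarith [hy x] : (0:ℝ) ≤ y x + τ) (by linarith : (0:ℝ) ≤ -(yγ x + τ))), mul_nonneg hγ.le (sq_nonneg (yγ x + τ))]
      · rw [min_eq_right h]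
        simp
    -- integrability
    have hiy : Integrable (fun x => y x + τ) N :=
      (y.continuous.add continuous_const).integrable_of_hasCompactSupport
        (HasCompactSupport.of_compactSpace _)
    have hiyγ : Integrable (fun x => yγ x + τ) N :=
      (yγ.continuous.add continuous_const).integrable_of_hasCompactSupport
        (HasCompactSupport.of_compactSpace _)
    have him : Integrable (fun x => |min (yγ x + τ) 0|) N :=
      (((yγ.continuous.add continuous_const).min continuous_const).abs).integrable_of_hasCompactSupport
        (HasCompactSupport.of_compactSpace _)
    have hcompl' : (∫ x, (y x + τ) ∂N) = 0 := by
      have : jint ν (fun x => y x + τ) = -∫ x, (y x + τ) ∂N := by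
        rw [jint, hP]; simp; rfl
      rw [this] at hcompl; linarith
    -- second term
    have hB : -jint ν (fun x => y x - yγ x) = -∫ x, (yγ x + τ) ∂N := by
      rw [jint, hP]
      simp only [integral_zero_measure, zero_sub, neg_neg]
      have : (fun x => y x - yγ x) = fun x => (y x + τ) - (yγ x + τ) := by
        funext x; ring
      rw [this, integral_sub hiy hiyγ, hcompl']
      ring
    -- sup bound
    set M := ⨆ x, |min (yγ x + τ) 0| with hM
    have hbdd : BddAbove (Set.range fun x => |min (yγ x + τ) 0|) :=
      (isCompact_range (((yγ.continuous.add continuous_const).min continuous_const).abs)).bddAbove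
    have hMle : ∀ x, |min (yγ x + τ) 0| ≤ M := fun x => le_ciSup hbdd x
    have hC : -∫ x, (yγ x + τ) ∂N ≤ M * (N Set.univ).toReal := by
      have step1 : -∫ x, (yγ x + τ) ∂N ≤ ∫ x, |min (yγ x + τ) 0| ∂N := by
        rw [← integral_neg]
        apply integral_mono hiyγ.neg him
        intro x
        show -(yγ x + τ) ≤ |min (yγ x + τ) 0|
        rcases le_total (yγ x + τ) 0 with h | h
        · rw [min_eq_left h, abs_of_nonpos h]
        · rw [min_eq_right h]; simp; linarith
      have step2 : ∫ x, |min (yγ x + τ) 0| ∂N ≤ ∫ _x, M ∂N := by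
        apply integral_mono him (integrable_const M)
        exact hMle
      have step3 : (∫ _x, M ∂N) = (N Set.univ).toReal * M := by
        rw [integral_const]; simp [smul_eq_mul]; exact Or.inl rfl
      linarith [step1, step2, step3.le, step3.ge, mul_comm M (N Set.univ).toReal]
    -- total variation
    have hTV : (ν.totalVariation Set.univ).toReal = (N Set.univ).toReal := by
      rw [SignedMeasure.totalVariation, hP]
      simp; rfl
    calc c * ∫ x, (l x - lγ x) ^ 2 ∂μ
        ≤ (∫ x, (y x - yγ x) * (γ * min (yγ x + τ) 0) ∂μ) -
            jint ν (fun x => y x - yγ x) := hvi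
      _ ≤ -jint ν (fun x => y x - yγ x) := by linarith
      _ = -∫ x, (yγ x + τ) ∂N := hB
      _ ≤ M * (N Set.univ).toReal := hC
      _ = M * (ν.totalVariation Set.univ).toReal := by rw [hTV]
end
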